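/- Let k ≥ 2, ρ the diagonal matrix −diag(e^{−πi/k},…,e^{−(k−1)πi/k}), Γᵢ = ρⁱ(1,…,1)ᵀ, and Πᵢ = (1−ρ)Γᵢ. Let Π be the lattice (ℤ-span) generated by Π₀,…,Π_{2k−3} in ℂ^{k−1}, and Γ the lattice generated by Γ₀,…,Γ_{2k−3}. Then Π ⊆ Γ, the quotient group Γ/Π is cyclic generated by the class of Γ₀, and the order of Γ₀ in Γ/Π is exactly k; hence Γ/Π ≅ ℤ/kℤ. -/

import Mathlib

open Polynomial Finset

private lemma geom_zero' {y : ℂ} {k : ℕ} (h1 : y ≠ 1) (hk : y ^ k = 1) :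
    ∑ i ∈ Finset.range k, y ^ i = 0 := by
  rw [geom_sum_eq h1, hk, sub_self, zero_div]

private lemma abel_sum' (y : ℂ) (m : ℕ) :
    ∑ i ∈ Finset.range m, ((m - i : ℕ) : ℂ) * (y ^ i - y ^ (i + 1))
      = (m : ℂ) - ∑ i ∈ Finset.range m, y ^ (i + 1) := by
  have h : ∀ i ∈ Finset.range m,
      ((m - i : ℕ) : ℂ) * (y ^ i - y ^ (i + 1))
        = (((m - i : ℕ) : ℂ) * y ^ i - ((m - (i+1) : ℕ) : ℂ) * y ^ (i+1)) - y ^ (i+1) := by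
    intro i hi
    rw [Finset.mem_range] at hi
    have h2 : (m - i : ℕ) = (m - (i+1)) + 1 := by omega
    rw [h2]
    push_cast
    ring
  rw [Finset.sum_congr rfl h, Finset.sum_sub_distrib,
    Finset.sum_range_sub' (fun i => ((m - i : ℕ) : ℂ) * y ^ i)]
  simp

private noncomputable def Spoly (k : ℕ) : Polynomial ℤ := ∑ i ∈ Finset.range k, X ^ (2*i)

private lemma Spoly_eq (k : ℕ) (hk : 1 ≤ k) :
    Spoly k = X ^ (2*k - 2) + ∑ i ∈ Finset.range (k-1), X ^ (2*i) := by
  have h : Spoly k = ∑ i ∈ Finset.range ((k-1)+1), (X : Polynomial ℤ) ^ (2*i) := by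
    rw [Spoly, show (k-1)+1 = k by omega]
  rw [h, Finset.sum_range_succ, show 2*(k-1) = 2*k-2 by omega, add_comm]

private lemma Spoly_tail_degree_lt (k : ℕ) (hk : 1 ≤ k) :
    (∑ i ∈ Finset.range (k-1), (X : Polynomial ℤ) ^ (2*i)).degree < ((2*k - 2 : ℕ) : WithBot ℕ) := by
  apply lt_of_le_of_lt (Polynomial.degree_sum_le _ _)
  rw [Finset.sup_lt_iff (by exact_mod_cast WithBot.bot_lt_coe _)]
  intro i hi
  rw [Finset.mem_range] at hi
  rw [Polynomial.degree_X_pow]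
  exact_mod_cast (by omega : 2*i < 2*k - 2)

private lemma Spoly_monic (k : ℕ) (hk : 1 ≤ k) : (Spoly k).Monic := by
  rw [Spoly_eq k hk]
  exact Polynomial.monic_X_pow_add (Spoly_tail_degree_lt k hk)

private lemma Spoly_degree (k : ℕ) (hk : 1 ≤ k) : (Spoly k).degree = ((2*k - 2 : ℕ) : WithBot ℕ) := by
  rw [Spoly_eq k hk, Polynomial.degree_add_eq_left_of_degree_lt, Polynomial.degree_X_pow]
  rw [Polynomial.degree_X_pow]
  exact Spoly_tail_degree_lt k hk

private lemma Spoly_eval_one (k : ℕ) : (Spoly k).eval 1 = (k : ℤ) := by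
  simp [Spoly, Polynomial.eval_finset_sum]

private lemma Spoly_map_eval (k : ℕ) (z : ℂ) :
    ((Spoly k).map (Int.castRingHom ℂ)).eval z = ∑ i ∈ Finset.range k, (z^2) ^ i := by
  rw [Spoly, Polynomial.map_sum]
  simp [Polynomial.eval_finset_sum, pow_mul]

theorem stmt_8 (k : ℕ) (hk : 2 ≤ k)
    (ρ : Matrix (Fin (k-1)) (Fin (k-1)) ℂ)
    (hρ : ρ = Matrix.diagonal (fun j : Fin (k-1) =>
      -Complex.exp (-(Real.pi : ℂ) * Complex.I * (((j : ℕ) : ℂ) + 1) / (k : ℂ))))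
    (Γ : ℕ → Fin (k-1) → ℂ)
    (hΓ : ∀ i, Γ i = (ρ ^ i).mulVec (fun _ => 1))
    (Pv : ℕ → Fin (k-1) → ℂ)
    (hPv : ∀ i, Pv i = (1 - ρ).mulVec (Γ i))
    (ΓL PL : Submodule ℤ (Fin (k-1) → ℂ))
    (hΓL : ΓL = Submodule.span ℤ (Set.range fun i : Fin (2*k-2) => Γ (i : ℕ)))
    (hPL : PL = Submodule.span ℤ (Set.range fun i : Fin (2*k-2) => Pv (i : ℕ))) :
    PL ≤ ΓL ∧
    (∀ x ∈ ΓL, ∃ n : ℤ, x - n • Γ 0 ∈ PL) ∧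
    (∀ n : ℤ, n • Γ 0 ∈ PL ↔ (k : ℤ) ∣ n) := by
  have hk0 : (k : ℂ) ≠ 0 := Nat.cast_ne_zero.mpr (by omega)
  set lam : Fin (k-1) → ℂ := fun j =>
      -Complex.exp (-(Real.pi : ℂ) * Complex.I * (((j : ℕ) : ℂ) + 1) / (k : ℂ)) with hlam
  have hΓ' : ∀ i j, Γ i j = lam j ^ i := by
    intro i j
    rw [hΓ, hρ, Matrix.diagonal_pow, Matrix.mulVec_diagonal]
    simp [Pi.pow_apply]
  have hPv' : ∀ i j, Pv i j = (1 - lam j) * lam j ^ i := by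
    intro i j
    rw [hPv, hρ, show (1 : Matrix (Fin (k-1)) (Fin (k-1)) ℂ) - Matrix.diagonal lam
        = Matrix.diagonal (fun j => 1 - lam j) by
      rw [← Matrix.diagonal_one, Matrix.diagonal_sub], Matrix.mulVec_diagonal, hΓ' i j]
  -- μ, the primitive 2k-th root of unity
  set μ : ℂ := Complex.exp ((Real.pi : ℂ) * Complex.I / k) with hμdef
  have hμ : IsPrimitiveRoot μ (2 * k) := by
    have := Complex.isPrimitiveRoot_exp (2 * k) (by omega)
    convert this using 2
    push_cast
    field_simp
  have hlamμ : ∀ j : Fin (k-1), lam j = μ ^ (k - 1 - (j : ℕ)) := by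
    intro j
    have hj : (j : ℕ) < k - 1 := j.2
    have hcast : ((k - 1 - (j:ℕ) : ℕ) : ℂ) = (k : ℂ) - 1 - (j : ℕ) := by
      push_cast [Nat.cast_sub (show (j:ℕ) ≤ k - 1 by omega), Nat.cast_sub (show 1 ≤ k by omega)]
      ring
    rw [hlam]
    simp only
    rw [hμdef, ← Complex.exp_nat_mul, hcast]
    rw [show ((k:ℂ) - 1 - (j:ℕ)) * ((Real.pi : ℂ) * Complex.I / k)
        = (Real.pi : ℂ) * Complex.I + (-(Real.pi : ℂ) * Complex.I * (((j : ℕ) : ℂ) + 1) / (k : ℂ)) by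
      field_simp
      ring]
    rw [Complex.exp_add, Complex.exp_pi_mul_I]
    ring
  -- geometric sum of squares of eigenvalues vanishes
  have hμpow : ∀ t : ℕ, ¬ (k ∣ t) → (μ ^ t) ^ 2 ≠ 1 ∧ ((μ ^ t) ^ 2) ^ k = 1 := by
    intro t ht
    constructor
    · intro h
      rw [← pow_mul, hμ.pow_eq_one_iff_dvd] at h
      obtain ⟨c, hc⟩ := h
      have hc' : t * 2 = (k * c) * 2 := by rw [hc]; ring
      exact ht ⟨c, by omega⟩
    · rw [← pow_mul, ← pow_mul, hμ.pow_eq_one_iff_dvd]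
      exact ⟨t, by ring⟩
  have hgeom : ∀ j : Fin (k-1), ∑ i ∈ Finset.range k, (lam j ^ 2) ^ i = 0 := by
    intro j
    have hj : (j : ℕ) < k - 1 := j.2
    have hnd : ¬ (k ∣ (k - 1 - (j:ℕ))) := by
      intro h
      have h1 : 1 ≤ k - 1 - (j:ℕ) := by omega
      have h2 : k - 1 - (j:ℕ) ≤ k - 1 := by omega
      have := Nat.le_of_dvd (by omega) h
      omega
    obtain ⟨hne, hone⟩ := hμpow (k - 1 - (j:ℕ)) hnd
    rw [hlamμ j]
    exact geom_zero' hne hone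
  -- Pv i = Γ i - Γ (i+1)
  have hPvsub : ∀ i, Pv i = Γ i - Γ (i+1) := by
    intro i
    funext j
    rw [Pi.sub_apply, hPv', hΓ', hΓ', pow_succ]
    ring
  -- generators belong to ΓL
  have hΓgen : ∀ i, i < 2*k-2 → Γ i ∈ ΓL := by
    intro i hi
    rw [hΓL]
    exact Submodule.subset_span ⟨⟨i, hi⟩, rfl⟩
  -- sum of even Γ's vanishes
  have hΓsum : ∑ i ∈ Finset.range k, Γ (2*i) = 0 := by
    funext j
    rw [Finset.sum_apply]
    simp only [hΓ', Pi.zero_apply]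
    rw [← hgeom j]
    exact Finset.sum_congr rfl fun i _ => by rw [pow_mul]
  have hΓlast : Γ (2*k-2) ∈ ΓL := by
    have h2 : ∑ i ∈ Finset.range ((k-1)+1), Γ (2*i) = 0 := by
      rw [show (k-1)+1 = k by omega]; exact hΓsum
    rw [Finset.sum_range_succ] at h2
    have h1 : Γ (2*(k-1)) = - ∑ i ∈ Finset.range (k-1), Γ (2*i) :=
      eq_neg_of_add_eq_zero_right h2
    rw [show 2*k-2 = 2*(k-1) by omega, h1]
    exact Submodule.neg_mem _ (Submodule.sum_mem _ fun i hi =>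
      hΓgen (2*i) (by rw [Finset.mem_range] at hi; omega))
  have hPLle : PL ≤ ΓL := by
    rw [hPL, Submodule.span_le]
    rintro x ⟨i, rfl⟩
    have hi : (i : ℕ) < 2*k-2 := i.2
    simp only [hPvsub]
    rcases lt_or_eq_of_le (show (i:ℕ) + 1 ≤ 2*k-2 by omega) with h | h
    · exact Submodule.sub_mem _ (hΓgen _ hi) (hΓgen _ h)
    · exact Submodule.sub_mem _ (hΓgen _ hi) (by rw [h]; exact hΓlast)
  refine ⟨hPLle, ?_, ?_⟩
  · -- every element of ΓL differs from a multiple of Γ 0 by an element of PL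
    have hgen : ∀ i, i < 2*k-2 → Γ i - (1:ℤ) • Γ 0 ∈ PL := by
      intro i hi
      have htel : ∑ m ∈ Finset.range i, Pv m = Γ 0 - Γ i := by
        rw [show (∑ m ∈ Finset.range i, Pv m) = ∑ m ∈ Finset.range i, (Γ m - Γ (m+1)) from
          Finset.sum_congr rfl fun m _ => hPvsub m]
        exact Finset.sum_range_sub' Γ i
      have : Γ i - (1:ℤ) • Γ 0 = - ∑ m ∈ Finset.range i, Pv m := by
        rw [htel, one_smul]; abel
      rw [this]
      exact Submodule.neg_mem _ (Submodule.sum_mem _ fun m hm => by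
        rw [hPL]
        exact Submodule.subset_span ⟨⟨m, by rw [Finset.mem_range] at hm; omega⟩, rfl⟩)
    intro x hx
    rw [hΓL] at hx
    induction hx using Submodule.span_induction with
    | mem x h =>
      obtain ⟨i, rfl⟩ := h
      exact ⟨1, hgen (i : ℕ) i.2⟩
    | zero => exact ⟨0, by simp⟩
    | add x y hx hy ihx ihy =>
      obtain ⟨a, ha⟩ := ihx
      obtain ⟨b, hb⟩ := ihy
      exact ⟨a + b, by rw [show x + y - (a+b) • Γ 0 = (x - a • Γ 0) + (y - b • Γ 0) by
        rw [add_smul]; abel]; exact Submodule.add_mem _ ha hb⟩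
    | smul a x hx ihx =>
      obtain ⟨b, hb⟩ := ihx
      exact ⟨a * b, by rw [show a • x - (a*b) • Γ 0 = a • (x - b • Γ 0) by
        rw [mul_smul, smul_sub]]; exact Submodule.smul_mem _ a hb⟩
  · -- the order of Γ 0 is exactly k
    intro n
    constructor
    · -- hard direction
      intro hmem
      rw [hPL, Submodule.mem_span_range_iff_exists_fun] at hmem
      obtain ⟨c, hc⟩ := hmem
      set f : ℤ →+* ℂ := Int.castRingHom ℂ with hf
      set P : Polynomial ℤ := ∑ i : Fin (2*k-2), C (c i) * X ^ (i : ℕ) with hPdef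
      set Q : Polynomial ℤ := (1 - X) * P - C n with hQdef
      set Qc : Polynomial ℂ := Q.map f with hQcdef
      have hQc_eval : ∀ z : ℂ,
          Qc.eval z = (1 - z) * (∑ i : Fin (2*k-2), (c i : ℂ) * z ^ (i:ℕ)) - n := by
        intro z
        rw [hQcdef, hQdef, hPdef]
        simp [Polynomial.map_sum, Polynomial.eval_finset_sum]
      have hscal : ∀ j : Fin (k-1),
          ∑ i : Fin (2*k-2), (c i : ℂ) * ((1 - lam j) * lam j ^ (i:ℕ)) = n := by
        intro j
        have h := congrFun hc j
        simp only [Finset.sum_apply, Pi.smul_apply, Pi.mul_apply, Pi.intCast_apply,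
          hPv', hΓ', zsmul_eq_mul, pow_zero, mul_one] at h
        exact h
      have hQlam : ∀ t : ℕ, 1 ≤ t → t ≤ k - 1 → Qc.eval (μ ^ t) = 0 := by
        intro t h1 h2
        have hj : k - 1 - t < k - 1 := by omega
        set j : Fin (k-1) := ⟨k-1-t, hj⟩ with hjdef
        have hl : lam j = μ ^ t := by
          rw [hlamμ j, hjdef]
          congr 1
          simp only []
          omega
        have hmul : (1 - μ^t) * (∑ i : Fin (2*k-2), (c i : ℂ) * (μ^t) ^ (i:ℕ)) = n := by
          rw [Finset.mul_sum, ← hl]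
          rw [← hscal j]
          exact Finset.sum_congr rfl fun i _ => by ring
        rw [hQc_eval, hmul, sub_self]
      have hnorm : ‖μ‖ = 1 := by
        have h := Complex.norm_eq_one_of_pow_eq_one hμ.pow_eq_one (by omega)
        exact h
      have hμne : ∀ m : ℕ, μ ^ m ≠ 0 := fun m => pow_ne_zero m (Complex.exp_ne_zero _)
      have hconjμ : ∀ m : ℕ, m ≤ 2*k → (starRingEnd ℂ) (μ ^ m) = μ ^ (2*k - m) := by
        intro m hm
        have h1 : μ ^ m * μ ^ (2*k - m) = 1 := by
          rw [← pow_add, show m + (2*k - m) = 2*k by omega, hμ.pow_eq_one]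
        have h2 : μ ^ m * (starRingEnd ℂ) (μ ^ m) = 1 := by
          rw [Complex.mul_conj, Complex.normSq_eq_norm_sq, norm_pow, hnorm, one_pow, one_pow,
            Complex.ofReal_one]
        exact mul_left_cancel₀ (hμne m) (h2.trans h1.symm)
      have hQc_conj : ∀ z : ℂ, Qc.eval ((starRingEnd ℂ) z) = (starRingEnd ℂ) (Qc.eval z) := by
        intro z
        rw [hQcdef, Polynomial.eval_map, Polynomial.eval_map, Polynomial.hom_eval₂]
        have : (starRingEnd ℂ).comp f = f := Subsingleton.elim _ _
        rw [this]
      set T : Finset ℕ := ((Finset.range (2*k)).erase 0).erase k with hT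
      have hTmem : ∀ t ∈ T, t ≠ 0 ∧ t ≠ k ∧ t < 2*k := by
        intro t ht
        rw [hT, Finset.mem_erase, Finset.mem_erase, Finset.mem_range] at ht
        exact ⟨ht.2.1, ht.1, ht.2.2⟩
      have hTcard : T.card = 2*k - 2 := by
        rw [hT, Finset.card_erase_of_mem (by rw [Finset.mem_erase, Finset.mem_range]; omega),
          Finset.card_erase_of_mem (by rw [Finset.mem_range]; omega), Finset.card_range]
        omega
      set s : Finset ℂ := T.image (fun t => μ ^ t) with hs
      have hscard : s.card = 2*k - 2 := by
        rw [hs, Finset.card_image_of_injOn, hTcard]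
        intro a ha b hb hab
        exact hμ.pow_inj (hTmem a ha).2.2 (hTmem b hb).2.2 hab
      have hSmonic : ((Spoly k).map f).Monic := (Spoly_monic k (by omega)).map f
      have hSeval : ∀ t ∈ T, ((Spoly k).map f).eval (μ ^ t) = 0 := by
        intro t ht
        obtain ⟨ht0, htk, htlt⟩ := hTmem t ht
        have hnd : ¬ (k ∣ t) := by
          rintro ⟨d, rfl⟩
          rcases Nat.lt_or_ge d 2 with h2 | h2
          · interval_cases d <;> omega
          · have := Nat.mul_le_mul_left k h2; omega
        rw [Spoly_map_eval]
        exact geom_zero' (hμpow t hnd).1 (hμpow t hnd).2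
      have hQroots : ∀ t ∈ T, Qc.eval (μ ^ t) = 0 := by
        intro t ht
        obtain ⟨ht0, htk, htlt⟩ := hTmem t ht
        rcases Nat.lt_or_ge t k with h | h
        · exact hQlam t (by omega) (by omega)
        · have hx : μ ^ t = (starRingEnd ℂ) (μ ^ (2*k - t)) := by
            rw [hconjμ _ (by omega), show 2*k - (2*k - t) = t by omega]
          rw [hx, hQc_conj, hQlam _ (by omega) (by omega), map_zero]
      set r : Polynomial ℂ := Qc %ₘ ((Spoly k).map f) with hr
      have hrroot : ∀ z ∈ s, r.eval z = 0 := by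
        intro z hz
        rw [hs, Finset.mem_image] at hz
        obtain ⟨t, ht, rfl⟩ := hz
        rw [hr, Polynomial.modByMonic_eq_sub_mul_div]
        simp [hQroots t ht, hSeval t ht]
      have hrzero : r = 0 := by
        by_cases h : r = 0
        · exact h
        · apply Polynomial.eq_zero_of_natDegree_lt_card_of_eval_eq_zero' r s hrroot
          have hdeg : r.degree < ((2*k-2 : ℕ) : WithBot ℕ) := by
            have hlt := Polynomial.degree_modByMonic_lt Qc hSmonic
            rwa [(Spoly_monic k (by omega)).degree_map, Spoly_degree k (by omega)] at hlt
          rw [hscard]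
          exact (Polynomial.natDegree_lt_iff_degree_lt h).mpr hdeg
      have hdvdC : (Spoly k).map f ∣ Qc :=
        (Polynomial.modByMonic_eq_zero_iff_dvd hSmonic).mp hrzero
      have hdvd : Spoly k ∣ Q :=
        (Polynomial.map_dvd_map f Int.cast_injective (Spoly_monic k (by omega))).mp hdvdC
      obtain ⟨R, hR⟩ := hdvd
      refine ⟨-R.eval 1, ?_⟩
      have h1 : Q.eval 1 = -n := by rw [hQdef]; simp
      have h2 : Q.eval 1 = (k : ℤ) * R.eval 1 := by
        rw [hR, Polynomial.eval_mul, Spoly_eval_one]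
      have h3 : -n = (k:ℤ) * R.eval 1 := h1.symm.trans h2
      rw [mul_neg, ← h3, neg_neg]
    · -- k ∣ n → n • Γ 0 ∈ PL
      rintro ⟨m, rfl⟩
      have hkey : (k:ℤ) • Γ 0 = ∑ i ∈ Finset.range (k-1),
          ((k - 1 - i : ℕ) : ℤ) • (Pv (2*i) + Pv (2*i+1)) := by
        funext j
        rw [Pi.smul_apply, Finset.sum_apply]
        simp only [Pi.smul_apply, Pi.add_apply, hPv', hΓ', zsmul_eq_mul]
        push_cast
        rw [show ((k:ℂ)) * lam j ^ 0 = (k:ℂ) by rw [pow_zero, mul_one]]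
        have hterm : ∀ i ∈ Finset.range (k-1),
            ((k - 1 - i : ℕ) : ℂ) * ((1 - lam j) * lam j ^ (2*i) + (1 - lam j) * lam j ^ (2*i+1))
              = ((k - 1 - i : ℕ) : ℂ) * ((lam j ^ 2) ^ i - (lam j ^ 2) ^ (i+1)) := by
          intro i _
          congr 1
          rw [pow_succ, pow_succ, pow_mul]
          ring
        rw [Finset.sum_congr rfl hterm, abel_sum' (lam j ^ 2) (k-1)]
        have h0 : ∑ i ∈ Finset.range k, (lam j ^ 2) ^ i = 0 := hgeom j
        rw [show k = (k-1)+1 by omega, Finset.sum_range_succ'] at h0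
        rw [show (∑ i ∈ Finset.range (k-1), (lam j ^ 2) ^ (i+1)) = -1 by
          rw [pow_zero] at h0; linear_combination h0]
        push_cast [Nat.cast_sub (show 1 ≤ k by omega)]
        ring
      have hkmem : (k:ℤ) • Γ 0 ∈ PL := by
        rw [hkey]
        refine Submodule.sum_mem _ fun i hi => Submodule.smul_mem _ _ ?_
        rw [Finset.mem_range] at hi
        refine Submodule.add_mem _ ?_ ?_
        · rw [hPL]; exact Submodule.subset_span ⟨⟨2*i, by omega⟩, rfl⟩
        · rw [hPL]; exact Submodule.subset_span ⟨⟨2*i+1, by omega⟩, rfl⟩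
      rw [mul_comm, mul_smul]
      exact Submodule.smul_mem _ m hkmem
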